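/- Every null sequence (aₙ) of compact operators on a Hilbert space admits a factorization aₙ = bₙ c where c is a fixed compact operator and (bₙ) is a sequence of compact operators converging to 0 in norm. -/

import Mathlib

set_option linter.unusedSectionVars false
set_option maxHeartbeats 800000

noncomputable section
open ContinuousLinearMap Filter Metric Submodule

variable {L : Type*} [NormedAddCommGroup L] [InnerProductSpace ℂ L] [CompleteSpace L]

open scoped Classical in
noncomputable def PrOp (W : Submodule ℂ L) : L →L[ℂ] L :=
  if h : HasOrthogonalProjection W then (letI := h; W.subtypeL ∘L orthogonalProjection W) else 0

lemma PrOp_def (W : Submodule ℂ L) [h : HasOrthogonalProjection W] :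
    PrOp W = W.subtypeL ∘L orthogonalProjection W := by
  simp [PrOp, h]

lemma PrOp_mem (W : Submodule ℂ L) [HasOrthogonalProjection W] (x : L) : PrOp W x ∈ W := by
  rw [PrOp_def]; exact (orthogonalProjection W x).2

lemma PrOp_eq_self (W : Submodule ℂ L) [HasOrthogonalProjection W] {x : L} (hx : x ∈ W) :
    PrOp W x = x := by
  rw [PrOp_def]
  exact (starProjection_eq_self_iff (K := W) (v := x)).mpr hx

lemma PrOp_isSelfAdjoint (W : Submodule ℂ L) [CompleteSpace W] : IsSelfAdjoint (PrOp W) := by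
  rw [PrOp_def]; exact isSelfAdjoint_starProjection W

lemma norm_sub_PrOp_le (W : Submodule ℂ L) [HasOrthogonalProjection W] (x : L) {w : L}
    (hw : w ∈ W) : ‖x - PrOp W x‖ ≤ ‖x - w‖ := by
  rw [PrOp_def]
  rw [show (W.subtypeL ∘L orthogonalProjection W) x = (orthogonalProjection W x : L) from rfl,
    ← starProjection_apply, starProjection_minimal]
  exact ciInf_le ⟨0, by rintro r ⟨y, rfl⟩; positivity⟩ (⟨w, hw⟩ : W)

lemma norm_one_sub_PrOp_apply_le (W : Submodule ℂ L) [HasOrthogonalProjection W] (x : L) :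
    ‖((1 - PrOp W) : L →L[ℂ] L) x‖ ≤ ‖x‖ := by
  simpa using norm_sub_PrOp_le W x W.zero_mem

lemma norm_one_sub_PrOp_le (W : Submodule ℂ L) [HasOrthogonalProjection W] :
    ‖(1 - PrOp W : L →L[ℂ] L)‖ ≤ 1 := by
  refine opNorm_le_bound _ zero_le_one fun x => ?_
  simpa using norm_one_sub_PrOp_apply_le W x

/-- Projection onto the smaller subspace absorbs the bigger one, both ways. -/
lemma PrOp_comp_PrOp_of_le {U V : Submodule ℂ L} [HasOrthogonalProjection U]
    [HasOrthogonalProjection V] (h : U ≤ V) : PrOp U ∘L PrOp V = PrOp U := by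
  ext x
  rw [PrOp_def U, PrOp_def V]
  exact congrArg Subtype.val (orthogonalProjectionOnto_starProjection_of_le h x)

lemma PrOp_comp_PrOp_of_le' {U V : Submodule ℂ L} [HasOrthogonalProjection U]
    [HasOrthogonalProjection V] (h : U ≤ V) : PrOp V ∘L PrOp U = PrOp U := by
  ext x
  exact PrOp_eq_self V (h (PrOp_mem U x))

lemma one_sub_PrOp_comp {U V : Submodule ℂ L} [HasOrthogonalProjection U]
    [HasOrthogonalProjection V] (h : U ≤ V) :
    (1 - PrOp U) ∘L (1 - PrOp V) = 1 - PrOp V ∧ (1 - PrOp V) ∘L (1 - PrOp U) = 1 - PrOp V := by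
  constructor
  · simp only [sub_comp, comp_sub, one_def, comp_id, id_comp, PrOp_comp_PrOp_of_le h]
    abel
  · simp only [sub_comp, comp_sub, one_def, comp_id, id_comp, PrOp_comp_PrOp_of_le' h]
    abel

/-- Finite-rank orthogonal projections are compact. -/
lemma PrOp_isCompactOperator (W : Submodule ℂ L) [FiniteDimensional ℂ W] :
    IsCompactOperator (PrOp W) := by
  refine ⟨Subtype.val '' (Metric.closedBall (0 : W) 1), ?_, ?_⟩
  · exact (isCompact_closedBall _ _).image continuous_subtype_val
  · refine Filter.mem_of_superset (Metric.ball_mem_nhds 0 one_pos) fun x hx => ?_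
    refine ⟨⟨PrOp W x, PrOp_mem W x⟩, ?_, rfl⟩
    rw [Metric.mem_closedBall, dist_zero_right]
    have h1 : ‖PrOp W x‖ ≤ ‖x‖ := by
      rw [PrOp_def]
      calc ‖(orthogonalProjection W x : L)‖ = ‖orthogonalProjection W x‖ := rfl
        _ ≤ ‖(orthogonalProjection W : L →L[ℂ] W)‖ * ‖x‖ := le_opNorm _ x
        _ ≤ 1 * ‖x‖ := by gcongr; exact orthogonalProjection_norm_le W
        _ = ‖x‖ := one_mul _
    calc ‖(⟨PrOp W x, _⟩ : W)‖ = ‖PrOp W x‖ := rfl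
      _ ≤ ‖x‖ := h1
      _ ≤ 1 := le_of_lt (by simpa using hx)

/-- Monotonicity: enlarging the subspace only improves left-approximation. -/
lemma norm_one_sub_PrOp_comp_mono {U V : Submodule ℂ L} [HasOrthogonalProjection U]
    [HasOrthogonalProjection V] (h : U ≤ V) (g : L →L[ℂ] L) :
    ‖(1 - PrOp V) ∘L g‖ ≤ ‖(1 - PrOp U) ∘L g‖ := by
  refine opNorm_le_bound _ (norm_nonneg _) fun x => ?_
  calc ‖((1 - PrOp V) ∘L g) x‖ = ‖g x - PrOp V (g x)‖ := by simp [sub_apply]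
    _ ≤ ‖g x - PrOp U (g x)‖ := norm_sub_PrOp_le V (g x) (h (PrOp_mem U (g x)))
    _ = ‖((1 - PrOp U) ∘L g) x‖ := by simp [sub_apply]
    _ ≤ ‖(1 - PrOp U) ∘L g‖ * ‖x‖ := le_opNorm _ x

/-- Key single-operator approximation: a compact operator is norm-approximated from the left
by finite-rank orthogonal projections. -/
lemma exists_fd_norm_one_sub_PrOp_comp_le (g : L →L[ℂ] L) (hg : IsCompactOperator g)
    {δ : ℝ} (hδ : 0 < δ) :
    ∃ W : Submodule ℂ L, FiniteDimensional ℂ W ∧ ‖(1 - PrOp W) ∘L g‖ ≤ δ := by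
  obtain ⟨K, hK, hKmem⟩ := hg
  obtain ⟨r, hr, hball⟩ := Metric.mem_nhds_iff.mp hKmem
  obtain ⟨t, htfin, htcover⟩ := (totallyBounded_iff.mp hK.totallyBounded) (δ * r / 2)
    (by positivity)
  refine ⟨Submodule.span ℂ t, FiniteDimensional.span_of_finite ℂ htfin, ?_⟩
  haveI : FiniteDimensional ℂ (Submodule.span ℂ t) := FiniteDimensional.span_of_finite ℂ htfin
  have hpt : ∀ x ∈ Metric.ball (0 : L) r, ‖((1 - PrOp (Submodule.span ℂ t)) ∘L g) x‖ ≤ δ * r / 2 := by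
    intro x hx
    have hgx : g x ∈ K := hball (by simpa using hx)
    obtain ⟨y, hyt, hy⟩ := Set.mem_iUnion₂.mp (htcover hgx)
    calc ‖((1 - PrOp (Submodule.span ℂ t)) ∘L g) x‖
        = ‖g x - PrOp (Submodule.span ℂ t) (g x)‖ := by simp [sub_apply]
      _ ≤ ‖g x - y‖ := norm_sub_PrOp_le _ (g x) (Submodule.subset_span hyt)
      _ ≤ δ * r / 2 := by
          rw [← dist_eq_norm]; exact le_of_lt (by simpa [dist_comm] using hy)
  -- convert ball bound into operator norm bound via a shell argument
  refine opNorm_le_of_shell (𝕜 := ℂ) hr hδ.le (c := (2 : ℂ)) (by norm_num) fun x hx1 hx2 => ?_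
  have h2 : ‖(2 : ℂ)‖ = 2 := by norm_num
  rw [h2] at hx1
  calc ‖((1 - PrOp (Submodule.span ℂ t)) ∘L g) x‖ ≤ δ * r / 2 :=
        hpt x (by simpa [mem_ball, dist_zero_right] using hx2)
    _ ≤ δ * ‖x‖ := by
        rw [div_le_iff₀ (by norm_num : (0:ℝ) < 2)] at hx1
        nlinarith [hx1, hδ.le]

/-- The adjoint of a compact operator is compact. -/
lemma IsCompactOperator.adjoint' {g : L →L[ℂ] L} (hg : IsCompactOperator g) :
    IsCompactOperator (ContinuousLinearMap.adjoint g) := by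
  have hseq : ∀ k : ℕ, ∃ f : L →L[ℂ] L, IsCompactOperator f ∧
      ‖ContinuousLinearMap.adjoint g - f‖ ≤ ((1:ℝ)/(k+1)) := by
    intro k
    obtain ⟨W, hWfd, hW⟩ := exists_fd_norm_one_sub_PrOp_comp_le g hg
      (show (0:ℝ) < 1/(k+1) by positivity)
    haveI := hWfd
    refine ⟨ContinuousLinearMap.adjoint g ∘L PrOp W, ?_, ?_⟩
    · have := (PrOp_isCompactOperator W).continuous_comp
        (ContinuousLinearMap.adjoint g).continuous
      exact this
    · have key : ContinuousLinearMap.adjoint g - ContinuousLinearMap.adjoint g ∘L PrOp W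
          = ContinuousLinearMap.adjoint ((1 - PrOp W) ∘L g) := by
        rw [ContinuousLinearMap.adjoint_comp]
        have hsa : ContinuousLinearMap.adjoint (1 - PrOp W : L →L[ℂ] L) = 1 - PrOp W := by
          haveI : CompleteSpace W := FiniteDimensional.complete ℂ W
          exact ((IsSelfAdjoint.one (R := L →L[ℂ] L)).sub (PrOp_isSelfAdjoint W)).adjoint_eq
        rw [hsa, comp_sub]
        simp [one_def, comp_id]
      rw [key]
      calc ‖ContinuousLinearMap.adjoint ((1 - PrOp W) ∘L g)‖ = ‖(1 - PrOp W) ∘L g‖ :=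
            LinearIsometryEquiv.norm_map (ContinuousLinearMap.adjoint) _
        _ ≤ 1/(k+1) := hW
  choose f hfc hfb using hseq
  refine isCompactOperator_of_tendsto (l := atTop) (F := f) ?_ (Eventually.of_forall hfc)
  rw [Metric.tendsto_atTop]
  intro ε hε
  obtain ⟨N, hN⟩ := exists_nat_one_div_lt hε
  refine ⟨N, fun k hk => ?_⟩
  rw [dist_eq_norm, ← norm_neg, neg_sub]
  calc ‖ContinuousLinearMap.adjoint g - f k‖ ≤ 1/(k+1) := hfb k
    _ ≤ 1/(N+1) := by have h : (N:ℝ) ≤ k := by exact_mod_cast hk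
                      gcongr
    _ < ε := hN

/-- The key lemma: a common finite-dimensional subspace works simultaneously for a null
sequence of compact operators, on the right. -/
lemma key_lemma (a : ℕ → (L →L[ℂ] L)) (ha : ∀ n, IsCompactOperator (a n))
    (hlim : Tendsto (fun n => ‖a n‖) atTop (nhds 0)) (V : Submodule ℂ L)
    (hV : FiniteDimensional ℂ V) {δ : ℝ} (hδ : 0 < δ) :
    ∃ W : Submodule ℂ L, FiniteDimensional ℂ W ∧ V ≤ W ∧
      ∀ n, ‖a n ∘L (1 - PrOp W)‖ ≤ δ := by
  -- choose N beyond which norms are small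
  have : ∀ᶠ n in atTop, ‖a n‖ < δ := by
    have := Metric.tendsto_atTop.mp hlim δ hδ
    obtain ⟨N, hN⟩ := this
    exact eventually_atTop.mpr ⟨N, fun n hn => by
      have := hN n hn; rwa [Real.dist_eq, sub_zero, abs_of_nonneg (norm_nonneg _)] at this⟩
  obtain ⟨N, hN⟩ := eventually_atTop.mp this
  -- for each n, a finite-dimensional W n approximating the adjoint
  have hchoice : ∀ n, ∃ Wn : Submodule ℂ L, FiniteDimensional ℂ Wn ∧
      ‖(1 - PrOp Wn) ∘L (ContinuousLinearMap.adjoint (a n))‖ ≤ δ :=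
    fun n => exists_fd_norm_one_sub_PrOp_comp_le _ (ha n).adjoint' hδ
  choose Wn hWnfd hWn using hchoice
  haveI := hV
  haveI := hWnfd
  refine ⟨V ⊔ (Finset.range N).sup Wn, inferInstance, le_sup_left, fun n => ?_⟩
  set W : Submodule ℂ L := V ⊔ (Finset.range N).sup Wn with hWdef
  haveI : FiniteDimensional ℂ W := inferInstance
  haveI : CompleteSpace W := FiniteDimensional.complete ℂ W
  rcases lt_or_ge n N with hn | hn
  · -- use the adjoint trick
    have hle : Wn n ≤ W := le_sup_of_le_right (Finset.le_sup (Finset.mem_range.mpr hn))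
    have hsa : ContinuousLinearMap.adjoint (1 - PrOp W : L →L[ℂ] L) = 1 - PrOp W :=
      ((IsSelfAdjoint.one (R := L →L[ℂ] L)).sub (PrOp_isSelfAdjoint W)).adjoint_eq
    have hkey : a n ∘L (1 - PrOp W)
        = ContinuousLinearMap.adjoint ((1 - PrOp W) ∘L ContinuousLinearMap.adjoint (a n)) := by
      rw [ContinuousLinearMap.adjoint_comp, ContinuousLinearMap.adjoint_adjoint, hsa]
    rw [hkey]
    calc ‖ContinuousLinearMap.adjoint ((1 - PrOp W) ∘L ContinuousLinearMap.adjoint (a n))‖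
        = ‖(1 - PrOp W) ∘L ContinuousLinearMap.adjoint (a n)‖ :=
          LinearIsometryEquiv.norm_map (ContinuousLinearMap.adjoint) _
      _ ≤ ‖(1 - PrOp (Wn n)) ∘L ContinuousLinearMap.adjoint (a n)‖ :=
          norm_one_sub_PrOp_comp_mono hle _
      _ ≤ δ := hWn n
  · -- the tail: operators are already small
    calc ‖a n ∘L (1 - PrOp W)‖ ≤ ‖a n‖ * ‖(1 - PrOp W : L →L[ℂ] L)‖ := opNorm_comp_le _ _
      _ ≤ ‖a n‖ * 1 := by gcongr; exact norm_one_sub_PrOp_le W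
      _ ≤ δ := by rw [mul_one]; exact (hN n hn).le

end

open Topology Metric

open ContinuousLinearMap Filter in
/-- Every null sequence `aₙ` of compact operators on a Hilbert space factors as
`aₙ = bₙ c` with `c` a fixed compact operator and `bₙ` compact operators with
`‖bₙ‖ → 0`. -/
theorem exists_factorization_of_null_sequence
    {L : Type*} [NormedAddCommGroup L] [InnerProductSpace ℂ L] [CompleteSpace L]
    (a : ℕ → (L →L[ℂ] L)) (ha : ∀ n, IsCompactOperator (a n))
    (hlim : Tendsto (fun n => ‖a n‖) atTop (nhds 0)) :
    ∃ (c : L →L[ℂ] L) (b : ℕ → (L →L[ℂ] L)),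
      IsCompactOperator c ∧ (∀ n, IsCompactOperator (b n)) ∧
      Tendsto (fun n => ‖b n‖) atTop (nhds 0) ∧ ∀ n, a n = b n ∘L c := by
  classical
  -- Step 1: recursively choose an increasing sequence of finite-dimensional subspaces
  have hrec : ∀ p : {V : Submodule ℂ L // FiniteDimensional ℂ V}, ∀ k : ℕ,
      ∃ q : {V : Submodule ℂ L // FiniteDimensional ℂ V}, p.1 ≤ q.1 ∧
        ∀ n, ‖a n ∘L (1 - PrOp q.1)‖ ≤ (4:ℝ)⁻¹ ^ k := by
    intro p k
    obtain ⟨W, hfd, hle, hb⟩ := key_lemma a ha hlim p.1 p.2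
      (show (0:ℝ) < 4⁻¹ ^ k by positivity)
    exact ⟨⟨W, hfd⟩, hle, hb⟩
  choose F hFle hFb using hrec
  let Ws : ℕ → {V : Submodule ℂ L // FiniteDimensional ℂ V} :=
    fun k => Nat.rec ⟨⊥, inferInstance⟩ (fun k p => F p k) k
  have hWs_succ : ∀ k, (Ws k).1 ≤ (Ws (k+1)).1 := fun k => hFle (Ws k) k
  have hWs_mono : Monotone (fun k => (Ws k).1) := monotone_nat_of_le_succ hWs_succ
  set rr : ℕ → (L →L[ℂ] L) := fun k => 1 - PrOp (Ws (k+1)).1 with hrr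
  have hbound : ∀ k n, ‖a n ∘L rr k‖ ≤ (4:ℝ)⁻¹ ^ k := fun k n => hFb (Ws k) k n
  -- basic properties of rr
  have hrrc : ∀ i k, i ≤ k → rr i ∘L rr k = rr k ∧ rr k ∘L rr i = rr k := by
    intro i k hik
    haveI := (Ws (i+1)).2
    haveI := (Ws (k+1)).2
    exact one_sub_PrOp_comp (hWs_mono (Nat.succ_le_succ hik))
  have hrrn : ∀ k, ‖rr k‖ ≤ 1 := by
    intro k; haveI := (Ws (k+1)).2; exact norm_one_sub_PrOp_le _
  -- Step 2: the operators c and d with explicit inverses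
  let c : ℕ → (L →L[ℂ] L) := fun k => Nat.rec 1 (fun k ck => ck - ((2:ℂ)^(k+1))⁻¹ • rr k) k
  let d : ℕ → (L →L[ℂ] L) := fun k => Nat.rec 1 (fun k dk => dk + (2:ℂ)^k • rr k) k
  have hc_succ : ∀ k, c (k+1) = c k - ((2:ℂ)^(k+1))⁻¹ • rr k := fun k => rfl
  have hd_succ : ∀ k, d (k+1) = d k + (2:ℂ)^k • rr k := fun k => rfl
  have hdr : ∀ m k, k ≤ m → d k ∘L rr m = (2:ℂ)^k • rr m := by
    intro m k
    induction k with
    | zero => intro _; simp [d, one_def]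
    | succ k ih =>
      intro hk
      have hk' : k ≤ m := Nat.le_of_succ_le hk
      rw [hd_succ, add_comp, smul_comp, ih hk', (hrrc k m hk').1, ← add_smul]
      congr 1
      ring
  have hrc : ∀ m k, k ≤ m → rr m ∘L c k = ((2:ℂ)^k)⁻¹ • rr m := by
    intro m k
    induction k with
    | zero => intro _; simp [c, one_def]
    | succ k ih =>
      intro hk
      have hk' : k ≤ m := Nat.le_of_succ_le hk
      rw [hc_succ, comp_sub, comp_smul, ih hk', (hrrc k m hk').2, ← sub_smul]
      congr 1
      rw [pow_succ]
      field_simp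
      ring
  have hdc : ∀ k, d k ∘L c k = 1 := by
    intro k
    induction k with
    | zero => simp [c, d, one_def]
    | succ k ih =>
      rw [hd_succ, hc_succ, add_comp, comp_sub, comp_sub, smul_comp, comp_smul, comp_smul,
        smul_comp, ih, hdr k k le_rfl, hrc k k le_rfl, (hrrc k k le_rfl).1]
      simp only [smul_smul]
      have h2 : (2:ℂ) ≠ 0 := two_ne_zero
      have h2k : (2:ℂ)^k ≠ 0 := pow_ne_zero _ h2
      have e1 : ((2:ℂ)^(k+1))⁻¹ * (2:ℂ)^k = 2⁻¹ := by
        rw [pow_succ, mul_inv, mul_right_comm, inv_mul_cancel₀ h2k, one_mul]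
      have e2 : (2:ℂ)^k * ((2:ℂ)^k)⁻¹ = 1 := mul_inv_cancel₀ h2k
      rw [e1, e2]
      module
  have hnorm2 : ∀ k : ℕ, ‖(2:ℂ)^k‖ = (2:ℝ)^k := by
    intro k; rw [norm_pow]; norm_num
  have hd_norm : ∀ k, ‖d k‖ ≤ (2:ℝ)^k := by
    intro k
    induction k with
    | zero => simpa [d, one_def] using norm_id_le
    | succ k ih =>
      rw [hd_succ]
      calc ‖d k + (2:ℂ)^k • rr k‖ ≤ ‖d k‖ + ‖(2:ℂ)^k • rr k‖ := norm_add_le _ _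
        _ ≤ (2:ℝ)^k + (2:ℝ)^k * 1 := by
            refine add_le_add ih ?_
            rw [norm_smul, hnorm2]
            exact mul_le_mul_of_nonneg_left (hrrn k) (by positivity)
        _ = (2:ℝ)^(k+1) := by ring
  -- Step 3: limits
  have hinc : ∀ n k, dist (a n ∘L d k) (a n ∘L d (k+1)) ≤ 1 * (1/2:ℝ)^k := by
    intro n k
    rw [dist_eq_norm]
    have he : a n ∘L d k - a n ∘L d (k+1) = -((2:ℂ)^k • (a n ∘L rr k)) := by
      rw [hd_succ, comp_add, comp_smul]; abel
    rw [he, norm_neg, norm_smul, hnorm2]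
    calc (2:ℝ)^k * ‖a n ∘L rr k‖ ≤ (2:ℝ)^k * (4:ℝ)⁻¹^k :=
          mul_le_mul_of_nonneg_left (hbound k n) (by positivity)
      _ = 1 * (1/2:ℝ)^k := by rw [one_mul, ← mul_pow]; norm_num
  have hc_cauchy : CauchySeq c := by
    refine cauchySeq_of_le_geometric (1/2 : ℝ) 1 (by norm_num) fun k => ?_
    rw [dist_eq_norm, hc_succ k, sub_sub_cancel, norm_smul, norm_inv, hnorm2]
    have h1 : ((2:ℝ)^(k+1))⁻¹ * ‖rr k‖ ≤ ((2:ℝ)^(k+1))⁻¹ * 1 :=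
      mul_le_mul_of_nonneg_left (hrrn k) (by positivity)
    have h2 : ((2:ℝ)^(k+1))⁻¹ ≤ (2:ℝ)⁻¹^k := by
      rw [inv_pow]
      exact inv_anti₀ (by positivity)
        (pow_le_pow_right₀ (by norm_num) (Nat.le_succ k))
    calc ((2:ℝ)^(k+1))⁻¹ * ‖rr k‖ ≤ ((2:ℝ)^(k+1))⁻¹ := by simpa using h1
      _ ≤ (2:ℝ)⁻¹^k := h2
      _ = 1 * (1/2:ℝ)^k := by norm_num
  obtain ⟨cinf, hcinf⟩ := cauchySeq_tendsto_of_complete hc_cauchy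
  have hbex : ∀ n, ∃ bn, Tendsto (fun k => a n ∘L d k) atTop (𝓝 bn) := by
    intro n
    exact cauchySeq_tendsto_of_complete
      (cauchySeq_of_le_geometric (1/2 : ℝ) 1 (by norm_num) (hinc n))
  choose b hb using hbex
  have htail : ∀ n k, dist (a n ∘L d k) (b n) ≤ 2 * (1/2:ℝ)^k := by
    intro n k
    have := dist_le_of_le_geometric_of_tendsto (1/2:ℝ) 1 (by norm_num) (hinc n) (hb n) k
    calc dist (a n ∘L d k) (b n) ≤ 1 * (1/2:ℝ)^k / (1 - 1/2) := this
      _ = 2 * (1/2:ℝ)^k := by ring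
  -- compactness of the b n
  have hbcomp : ∀ n, IsCompactOperator (b n) := by
    intro n
    refine isCompactOperator_of_tendsto (hb n) (Eventually.of_forall fun k => ?_)
    have := (ha n).comp_clm (d k)
    exact this
  -- compactness of cinf
  have hPcomp : ∀ k, IsCompactOperator (PrOp (Ws (k+1)).1) := by
    intro k; haveI := (Ws (k+1)).2; exact PrOp_isCompactOperator _
  have hck : ∀ k, IsCompactOperator ⇑(c k - ((2:ℂ)^k)⁻¹ • 1 : L →L[ℂ] L) := by
    intro k
    induction k with
    | zero =>
      have h0 : (c 0 - ((2:ℂ)^0)⁻¹ • 1 : L →L[ℂ] L) = 0 := by simp [c]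
      rw [h0]
      simpa using isCompactOperator_zero
    | succ k ih =>
      have h2 : ((2:ℂ)^k)⁻¹ = ((2:ℂ)^(k+1))⁻¹ + ((2:ℂ)^(k+1))⁻¹ := by
        have : (2:ℂ)^(k+1) = 2^k * 2 := by rw [pow_succ]
        rw [this]
        have h2k : (2:ℂ)^k ≠ 0 := pow_ne_zero _ two_ne_zero
        field_simp
        ring
      have he : (c (k+1) - ((2:ℂ)^(k+1))⁻¹ • 1 : L →L[ℂ] L)
          = (c k - ((2:ℂ)^k)⁻¹ • 1) + ((2:ℂ)^(k+1))⁻¹ • PrOp (Ws (k+1)).1 := by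
        rw [hc_succ k, h2]
        have hrreq : rr k = 1 - PrOp (Ws (k+1)).1 := rfl
        rw [hrreq]
        module
      rw [he]
      have := ih.add ((hPcomp k).smul (((2:ℂ)^(k+1))⁻¹))
      simpa using this
  have h0 : Tendsto (fun k => (((2:ℂ)^k)⁻¹ • 1 : L →L[ℂ] L)) atTop (𝓝 0) := by
    rw [tendsto_zero_iff_norm_tendsto_zero]
    refine squeeze_zero (fun k => norm_nonneg _) (fun k => ?_)
      (tendsto_pow_atTop_nhds_zero_of_lt_one (by norm_num : (0:ℝ) ≤ 1/2) (by norm_num))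
    rw [norm_smul, norm_inv, hnorm2]
    calc ((2:ℝ)^k)⁻¹ * ‖(1 : L →L[ℂ] L)‖ ≤ ((2:ℝ)^k)⁻¹ * 1 :=
          mul_le_mul_of_nonneg_left (by simpa [one_def] using norm_id_le (E := L))
            (by positivity)
      _ = (1/2:ℝ)^k := by rw [mul_one, ← inv_pow]; norm_num
  have hc2 : Tendsto (fun k => (c k - ((2:ℂ)^k)⁻¹ • 1 : L →L[ℂ] L)) atTop (𝓝 cinf) := by
    simpa using hcinf.sub h0
  have hccomp : IsCompactOperator cinf :=
    isCompactOperator_of_tendsto hc2 (Eventually.of_forall hck)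
  -- the norms of b n tend to zero
  have hbnorm : ∀ n k, ‖b n‖ ≤ ‖a n‖ * (2:ℝ)^k + 2 * (1/2:ℝ)^k := by
    intro n k
    have h1 : b n = (a n ∘L d k) - ((a n ∘L d k) - b n) := by abel
    calc ‖b n‖ = ‖(a n ∘L d k) - ((a n ∘L d k) - b n)‖ := by rw [← h1]
      _ ≤ ‖a n ∘L d k‖ + ‖(a n ∘L d k) - b n‖ := norm_sub_le _ _
      _ ≤ ‖a n‖ * (2:ℝ)^k + 2 * (1/2:ℝ)^k := by
          gcongr
          · calc ‖a n ∘L d k‖ ≤ ‖a n‖ * ‖d k‖ := opNorm_comp_le _ _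
              _ ≤ ‖a n‖ * (2:ℝ)^k := mul_le_mul_of_nonneg_left (hd_norm k) (norm_nonneg _)
          · rw [← dist_eq_norm]; exact htail n k
  have hbtend : Tendsto (fun n => ‖b n‖) atTop (𝓝 0) := by
    rw [Metric.tendsto_atTop]
    intro ε hε
    obtain ⟨k, hk⟩ : ∃ k : ℕ, 2 * (1/2:ℝ)^k < ε/2 := by
      obtain ⟨k, hk⟩ := exists_pow_lt_of_lt_one (show (0:ℝ) < ε/4 by positivity)
        (by norm_num : (1/2:ℝ) < 1)
      exact ⟨k, by nlinarith⟩
    obtain ⟨N, hN⟩ := Metric.tendsto_atTop.mp hlim (ε/2 / 2^k) (by positivity)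
    refine ⟨N, fun n hn => ?_⟩
    have han : ‖a n‖ < ε/2 / 2^k := by
      have := hN n hn
      rwa [Real.dist_eq, sub_zero, abs_of_nonneg (norm_nonneg _)] at this
    have hfin : ‖b n‖ < ε := by
      have hstep : ‖a n‖ * (2:ℝ)^k + 2 * (1/2:ℝ)^k < ε/2/2^k * 2^k + ε/2 :=
        add_lt_add_of_lt_of_le (mul_lt_mul_of_pos_right han (by positivity)) hk.le
      have heq : ε/2/2^k * (2:ℝ)^k = ε/2 := by field_simp
      calc ‖b n‖ ≤ ‖a n‖ * (2:ℝ)^k + 2 * (1/2:ℝ)^k := hbnorm n k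
        _ < ε/2/2^k * 2^k + ε/2 := hstep
        _ = ε := by rw [heq]; ring
    rwa [Real.dist_eq, sub_zero, abs_of_nonneg (norm_nonneg _)]
  -- the factorization
  refine ⟨cinf, b, hccomp, hbcomp, hbtend, fun n => ?_⟩
  have h1 : ∀ k, (a n ∘L d k) * c k = a n := by
    intro k
    rw [mul_def, comp_assoc, hdc k]
    simp [one_def]
  have h2 : Tendsto (fun k => (a n ∘L d k) * c k) atTop (𝓝 (b n * cinf)) :=
    (hb n).mul hcinf
  have h3 : Tendsto (fun _ : ℕ => a n) atTop (𝓝 (b n * cinf)) := by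
    simpa only [h1] using h2
  have := tendsto_nhds_unique tendsto_const_nhds h3
  rw [this, mul_def]
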